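/- If for each episode k, π^k is a Nash equilibrium of the optimistic game with payoffs V̄_i^k, and V̄_i^k(μ) ≥ V_i(μ) for every pure strategy profile μ and every player i, then the Nash regret satisfies Σ_k max_i (max_{a_i} E_{μ_{-i}~π^k_{-i}}[V_i(a_i, μ_{-i})] − V_i(π^k)) ≤ Σ_k max_i E_{μ~π^k}[V̄_i^k(μ) − V_i(μ)]. -/
import Mathlib


open Finset

/-- Nash regret bounded via optimistic value estimates. -/
theorem nash_regret_via_optimism {n K : ℕ} (S : Fin n → Type*)
    [∀ i, Fintype (S i)] [∀ i, Nonempty (S i)] (hn : 0 < n)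
    (V : Fin n → (∀ i, S i) → ℝ)                 -- true values
    (Vbar : Fin K → Fin n → (∀ i, S i) → ℝ)      -- optimistic values
    (π : Fin K → (∀ i, S i) → ℝ)
    (q : Fin K → ∀ i, S i → ℝ)
    (hprod : ∀ k μ, π k μ = ∏ i, q k i (μ i))
    (hπ0 : ∀ k μ, 0 ≤ π k μ) (hπ1 : ∀ k, ∑ μ, π k μ = 1)
    (hoptim : ∀ k i μ, V i μ ≤ Vbar k i μ)
    (hNash : ∀ k (i : Fin n),
      (Finset.univ.sup' Finset.univ_nonempty (fun a : S i =>
        ∑ μ, π k μ * Vbar k i (Function.update μ i a)))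
        = ∑ μ, π k μ * Vbar k i μ) :
    haveI : Nonempty (Fin n) := Fin.pos_iff_nonempty.mp hn
    (∑ k : Fin K,
      Finset.univ.sup' Finset.univ_nonempty (fun i : Fin n =>
        (Finset.univ.sup' Finset.univ_nonempty (fun a : S i =>
          ∑ μ, π k μ * V i (Function.update μ i a)))
          - ∑ μ, π k μ * V i μ))
      ≤ ∑ k : Fin K,
          Finset.univ.sup' Finset.univ_nonempty (fun i : Fin n =>
            ∑ μ, π k μ * (Vbar k i μ - V i μ)) := by
  haveI : Nonempty (Fin n) := Fin.pos_iff_nonempty.mp hn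
  refine Finset.sum_le_sum fun k _ => ?_
  refine Finset.sup'_le _ _ fun i _ => ?_
  have h1 : (Finset.univ.sup' Finset.univ_nonempty (fun a : S i =>
      ∑ μ, π k μ * V i (Function.update μ i a)))
      ≤ ∑ μ, π k μ * Vbar k i μ := by
    rw [← hNash k i]
    refine Finset.sup'_mono_fun ?_ |>.trans le_rfl
    intro a _
    exact Finset.sum_le_sum fun μ _ =>
      mul_le_mul_of_nonneg_left (hoptim k i _) (hπ0 k μ)
  have h2 : (∑ μ, π k μ * Vbar k i μ) - ∑ μ, π k μ * V i μ
      = ∑ μ, π k μ * (Vbar k i μ - V i μ) := by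
    rw [← Finset.sum_sub_distrib]
    exact Finset.sum_congr rfl fun μ _ => by ring
  calc (Finset.univ.sup' Finset.univ_nonempty (fun a : S i =>
        ∑ μ, π k μ * V i (Function.update μ i a))) - ∑ μ, π k μ * V i μ
      ≤ (∑ μ, π k μ * Vbar k i μ) - ∑ μ, π k μ * V i μ := by linarith
    _ = ∑ μ, π k μ * (Vbar k i μ - V i μ) := h2
    _ ≤ _ := Finset.le_sup' (fun j : Fin n => ∑ μ, π k μ * (Vbar k j μ - V j μ)) (Finset.mem_univ i)
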